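/- Let G be a connected simple graph on a finite vertex type V with at least two vertices, let I ⊆ V be the set of IC nodes, L : V → V → ℝ a link-cost function and Γ ≥ 1 a real weight. Let i, k ∈ I be distinct vertices that are adjacent in G, and suppose the graph G−ik obtained by deleting the edge {i,k} is still connected. If L(i,k) < Γ − 1 and L(k,i) < Γ − 1, then severing the edge strictly increases the cost of both endpoints: C(i, G−ik) > C(i, G) and C(k, G−ik) > C(k, G). -/

import Mathlib

open SimpleGraph
open scoped Classical

noncomputable def bridging {V : Type*} [Fintype V] (G : SimpleGraph V) (i : V) : ℝ :=
  (G.degree i : ℝ)⁻¹ / ∑ j ∈ G.neighborFinset i, (G.degree j : ℝ)⁻¹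

noncomputable def addE {V : Type*} (G : SimpleGraph V) (i k : V) : SimpleGraph V :=
  G ⊔ fromEdgeSet {s(i, k)}

noncomputable def delE {V : Type*} (G : SimpleGraph V) (i k : V) : SimpleGraph V :=
  G.deleteEdges {s(i, k)}

noncomputable def cost {V : Type*} [Fintype V] (G : SimpleGraph V) (I : Set V)
    (L : V → V → ℝ) (Γ : ℝ) (i : V) : ℝ :=
  (∑ z ∈ G.neighborFinset i, L i z) + Γ * (∑ j ∈ I.toFinset, (G.dist i j : ℝ))
    + (∑ k ∈ Iᶜ.toFinset, (G.dist i k : ℝ)) + bridging G i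

lemma delE_adj {V : Type*} (G : SimpleGraph V) (i k a b : V) :
    (delE G i k).Adj a b ↔ G.Adj a b ∧ s(a, b) ≠ s(i, k) := by
  simp [delE]

lemma delE_le {V : Type*} (G : SimpleGraph V) (i k : V) : delE G i k ≤ G :=
  SimpleGraph.deleteEdges_le _

lemma delE_nbhd_i {V : Type*} [Fintype V] (G : SimpleGraph V) (i k : V) :
    (delE G i k).neighborFinset i = (G.neighborFinset i).erase k := by
  ext z
  simp only [SimpleGraph.mem_neighborFinset, delE_adj, Finset.mem_erase, ne_eq, Sym2.eq_iff]
  constructor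
  · rintro ⟨h, hne⟩
    exact ⟨fun hzk => hne (Or.inl ⟨trivial, hzk⟩), h⟩
  · rintro ⟨hzk, h⟩
    refine ⟨h, fun hc => ?_⟩
    rcases hc with ⟨-, rfl⟩ | ⟨rfl, rfl⟩
    · exact hzk rfl
    · exact G.loopless.irrefl _ h

lemma delE_nbhd_other {V : Type*} [Fintype V] (G : SimpleGraph V) (i k v : V)
    (hvi : v ≠ i) (hvk : v ≠ k) :
    (delE G i k).neighborFinset v = G.neighborFinset v := by
  ext z
  simp only [SimpleGraph.mem_neighborFinset, delE_adj, ne_eq, Sym2.eq_iff]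
  refine ⟨fun h => h.1, fun h => ⟨h, fun hc => ?_⟩⟩
  rcases hc with ⟨rfl, rfl⟩ | ⟨rfl, rfl⟩
  · exact hvi rfl
  · exact hvk rfl

lemma delE_degree_other {V : Type*} [Fintype V] (G : SimpleGraph V) (i k v : V)
    (hvi : v ≠ i) (hvk : v ≠ k) : (delE G i k).degree v = G.degree v := by
  rw [← SimpleGraph.card_neighborFinset_eq_degree, ← SimpleGraph.card_neighborFinset_eq_degree,
    delE_nbhd_other G i k v hvi hvk]

lemma cost_del_lt {V : Type*} [Fintype V] (G : SimpleGraph V) (hG : G.Connected)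
    (hV : 1 < Fintype.card V) (I : Set V) (L : V → V → ℝ) (Γ : ℝ) (hΓ : 1 ≤ Γ)
    (i k : V) (hk : k ∈ I) (hik : i ≠ k) (hadj : G.Adj i k)
    (hcon : (delE G i k).Connected)
    (h1 : L i k < Γ - 1) :
    cost (delE G i k) I L Γ i > cost G I L Γ i := by
  set H := delE G i k with hH
  -- basic adjacency facts
  have hHle : H ≤ G := delE_le G i k
  have hknb : k ∈ G.neighborFinset i := (SimpleGraph.mem_neighborFinset G i k).2 hadj
  have hHnb : H.neighborFinset i = (G.neighborFinset i).erase k := delE_nbhd_i G i k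
  have hnadj : ¬ H.Adj i k := by
    rw [hH, delE_adj]; exact fun h => h.2 rfl
  -- distance monotonicity
  have hdist : ∀ a b : V, (G.dist a b : ℝ) ≤ (H.dist a b : ℝ) := by
    intro a b
    exact_mod_cast SimpleGraph.Reachable.dist_anti hHle (hcon.preconnected a b)
  -- distance from i to k increases by at least 1
  have hd1 : G.dist i k = 1 := SimpleGraph.dist_eq_one_iff_adj.2 hadj
  have hd2 : 2 ≤ H.dist i k := by
    have hpos : 0 < H.dist i k := hcon.pos_dist_of_ne hik
    have hne1 : H.dist i k ≠ 1 := fun h => hnadj (SimpleGraph.dist_eq_one_iff_adj.1 h)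
    omega
  -- link cost sum
  have hL : ∑ z ∈ H.neighborFinset i, L i z = (∑ z ∈ G.neighborFinset i, L i z) - L i k := by
    rw [hHnb, eq_sub_iff_add_eq, Finset.sum_erase_add _ _ hknb]
  -- sum of distances to I increases by at least 1
  have hkI : k ∈ I.toFinset := Set.mem_toFinset.2 hk
  have hsumI : (∑ j ∈ I.toFinset, (G.dist i j : ℝ)) + 1 ≤ ∑ j ∈ I.toFinset, (H.dist i j : ℝ) := by
    have := Finset.sum_le_sum (s := I.toFinset.erase k)
      (f := fun j => (G.dist i j : ℝ)) (g := fun j => (H.dist i j : ℝ))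
      (fun j _ => hdist i j)
    have e1 : (∑ j ∈ I.toFinset.erase k, (G.dist i j : ℝ)) + (G.dist i k : ℝ)
        = ∑ j ∈ I.toFinset, (G.dist i j : ℝ) := Finset.sum_erase_add _ _ hkI
    have e2 : (∑ j ∈ I.toFinset.erase k, (H.dist i j : ℝ)) + (H.dist i k : ℝ)
        = ∑ j ∈ I.toFinset, (H.dist i j : ℝ) := Finset.sum_erase_add _ _ hkI
    have hd2' : (G.dist i k : ℝ) + 1 ≤ (H.dist i k : ℝ) := by
      rw [hd1]
      exact_mod_cast hd2
    linarith
  -- sum of distances to complement doesn't decrease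
  have hsumC : (∑ j ∈ Iᶜ.toFinset, (G.dist i j : ℝ)) ≤ ∑ j ∈ Iᶜ.toFinset, (H.dist i j : ℝ) :=
    Finset.sum_le_sum (fun j _ => hdist i j)
  -- bridging doesn't decrease
  have hbr : bridging G i ≤ bridging H i := by
    have hdegH : 0 < H.degree i := by
      rw [SimpleGraph.degree_pos_iff_exists_adj]
      obtain ⟨v, hv⟩ := Fintype.exists_ne_of_one_lt_card hV i
      obtain ⟨p⟩ := hcon.preconnected i v
      cases p with
      | nil => exact absurd rfl hv
      | cons h _ => exact ⟨_, h⟩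
    have hdegG : H.degree i + 1 = G.degree i := by
      rw [← SimpleGraph.card_neighborFinset_eq_degree, ← SimpleGraph.card_neighborFinset_eq_degree,
        hHnb, Finset.card_erase_add_one hknb]
    -- neighbor degree sums
    have hdeq : ∀ j ∈ H.neighborFinset i, H.degree j = G.degree j := by
      intro j hj
      rw [hHnb, Finset.mem_erase] at hj
      have hji : j ≠ i := by
        rintro rfl
        exact G.loopless.irrefl _ ((SimpleGraph.mem_neighborFinset _ _ _).1 hj.2)
      exact delE_degree_other G i k j hji hj.1
    have hSeq : ∑ j ∈ H.neighborFinset i, (H.degree j : ℝ)⁻¹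
        = ∑ j ∈ H.neighborFinset i, (G.degree j : ℝ)⁻¹ :=
      Finset.sum_congr rfl (fun j hj => by rw [hdeq j hj])
    set S' : ℝ := ∑ j ∈ H.neighborFinset i, (G.degree j : ℝ)⁻¹ with hS'
    set S : ℝ := ∑ j ∈ G.neighborFinset i, (G.degree j : ℝ)⁻¹ with hS
    have hS'pos : 0 < S' := by
      apply Finset.sum_pos
      · intro j hj
        have : G.Adj i j := hHle ((SimpleGraph.mem_neighborFinset H i j).1 hj)
        have : 0 < G.degree j :=
          (SimpleGraph.degree_pos_iff_exists_adj G j).2 ⟨i, this.symm⟩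
        positivity
      · exact Finset.card_pos.1 (by rw [SimpleGraph.card_neighborFinset_eq_degree]; exact hdegH)
    have hS'S : S' ≤ S := by
      rw [hS', hS, hHnb]
      apply Finset.sum_le_sum_of_subset_of_nonneg (Finset.erase_subset _ _)
      intro j _ _
      positivity
    have hdd : (G.degree i : ℝ)⁻¹ ≤ (H.degree i : ℝ)⁻¹ := by
      apply inv_anti₀
      · exact_mod_cast hdegH
      · exact_mod_cast (by omega : H.degree i ≤ G.degree i)
    unfold bridging
    rw [hSeq]
    exact div_le_div₀ (by positivity) hdd hS'pos hS'S
  unfold cost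
  rw [hL]
  nlinarith [hsumI, hsumC, hbr, h1, hΓ]

theorem stmt1 {V : Type*} [Fintype V] (G : SimpleGraph V) (hG : G.Connected)
    (hV : 1 < Fintype.card V) (I : Set V) (L : V → V → ℝ) (Γ : ℝ) (hΓ : 1 ≤ Γ)
    (i k : V) (hi : i ∈ I) (hk : k ∈ I) (hik : i ≠ k) (hadj : G.Adj i k)
    (hcon : (delE G i k).Connected)
    (h1 : L i k < Γ - 1) (h2 : L k i < Γ - 1) :
    cost (delE G i k) I L Γ i > cost G I L Γ i ∧
    cost (delE G i k) I L Γ k > cost G I L Γ k := by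
  have hswap : delE G i k = delE G k i := by
    unfold delE
    rw [Sym2.eq_swap]
  constructor
  · exact cost_del_lt G hG hV I L Γ hΓ i k hk hik hadj hcon h1
  · rw [hswap]
    exact cost_del_lt G hG hV I L Γ hΓ k i hi hik.symm hadj.symm (hswap ▸ hcon) h2
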